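/- arXiv:1704.00376 — 2 statements merged into one kernel-verified Lean document; each statement's English description precedes it below -/
import Mathlib

section
/- The Bures distance d_B(σ,ρ) = √(1 − tr(|σ^{1/2}ρ^{1/2}|)) satisfies the triangle inequality on the set of d×d density matrices: d_B(σ,ρ) ≤ d_B(σ,θ) + d_B(θ,ρ) for all density matrices σ, θ, ρ. -/
open scoped Matrix ComplexOrder

/-- The positive square root of a positive semidefinite matrix (junk value `0` otherwise). -/
noncomputable def matSqrt {d : ℕ} (x : Matrix (Fin d) (Fin d) ℂ) : Matrix (Fin d) (Fin d) ℂ :=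
  @dite _ x.PosSemidef (Classical.propDecidable _) (fun h => (h.1.eigenvectorUnitary : Matrix (Fin d) (Fin d) ℂ) *
    Matrix.diagonal ((↑) ∘ Real.sqrt ∘ h.1.eigenvalues) *
    (star h.1.eigenvectorUnitary : Matrix (Fin d) (Fin d) ℂ)) (fun _ => 0)

/-- The absolute value `|x| = (xᴴx)^{1/2}` of a matrix. -/
noncomputable def matAbs {d : ℕ} (x : Matrix (Fin d) (Fin d) ℂ) : Matrix (Fin d) (Fin d) ℂ :=
  matSqrt (xᴴ * x)

/-- Fidelity `F(σ,ρ) = tr |σ^{1/2} ρ^{1/2}|`. -/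
noncomputable def fid {d : ℕ} (σ ρ : Matrix (Fin d) (Fin d) ℂ) : ℝ :=
  (matAbs (matSqrt σ * matSqrt ρ)).trace.re

/-- Bures distance `d_B(σ,ρ) = √(1 - F(σ,ρ))`. -/
noncomputable def dB {d : ℕ} (σ ρ : Matrix (Fin d) (Fin d) ℂ) : ℝ :=
  Real.sqrt (1 - fid σ ρ)

noncomputable def Matrix.PosSemidef.sqrt {d : ℕ} {x : Matrix (Fin d) (Fin d) ℂ}
    (h : x.PosSemidef) : Matrix (Fin d) (Fin d) ℂ :=
  (h.1.eigenvectorUnitary : Matrix (Fin d) (Fin d) ℂ) *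
    Matrix.diagonal ((↑) ∘ Real.sqrt ∘ h.1.eigenvalues) *
    (star h.1.eigenvectorUnitary : Matrix (Fin d) (Fin d) ℂ)

theorem Matrix.PosSemidef.posSemidef_sqrt {d : ℕ} {x : Matrix (Fin d) (Fin d) ℂ}
    (h : x.PosSemidef) : h.sqrt.PosSemidef := by
  have hD : (Matrix.diagonal ((↑) ∘ Real.sqrt ∘ h.1.eigenvalues : Fin d → ℂ)).PosSemidef :=
    Matrix.posSemidef_diagonal_iff.mpr fun i => by
      simp only [Function.comp_apply]
      exact_mod_cast Real.sqrt_nonneg _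
  exact hD.mul_mul_conjTranspose_same _

theorem Matrix.PosSemidef.sqrt_mul_self {d : ℕ} {x : Matrix (Fin d) (Fin d) ℂ}
    (h : x.PosSemidef) : h.sqrt * h.sqrt = x := by
  have hU : (star h.1.eigenvectorUnitary : Matrix (Fin d) (Fin d) ℂ) *
      (h.1.eigenvectorUnitary : Matrix (Fin d) (Fin d) ℂ) = 1 :=
    Matrix.mem_unitaryGroup_iff'.mp h.1.eigenvectorUnitary.2
  have hs := h.1.spectral_theorem
  rw [Unitary.conjStarAlgAut_apply] at hs
  conv_rhs => rw [hs]
  unfold Matrix.PosSemidef.sqrt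
  simp only [Matrix.mul_assoc]
  rw [← Matrix.mul_assoc _ (h.1.eigenvectorUnitary : Matrix (Fin d) (Fin d) ℂ), hU, Matrix.one_mul,
    ← Matrix.mul_assoc (Matrix.diagonal _), Matrix.diagonal_mul_diagonal]
  congr 3
  ext i
  simp only [Function.comp_apply]
  rw [← Complex.ofReal_mul, Real.mul_self_sqrt (h.eigenvalues_nonneg i)]
  rfl

open Matrix

theorem polar_decomp {d : ℕ} (M : Matrix (Fin d) (Fin d) ℂ) :
    ∃ U ∈ Matrix.unitaryGroup (Fin d) ℂ,
      M = U * (Matrix.posSemidef_conjTranspose_mul_self M).sqrt := by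
  classical
  set hH := Matrix.posSemidef_conjTranspose_mul_self M with hHdef
  set V : Matrix (Fin d) (Fin d) ℂ := (hH.1.eigenvectorUnitary : Matrix (Fin d) (Fin d) ℂ) with hVdef
  set lam := hH.1.eigenvalues with hlamdef
  have hVmem : V ∈ Matrix.unitaryGroup (Fin d) ℂ := hH.1.eigenvectorUnitary.2
  have hV1 : V * star V = 1 := (Matrix.mem_unitaryGroup_iff).mp hVmem
  have hV1' : star V * V = 1 := (Matrix.mem_unitaryGroup_iff').mp hVmem
  have hspec : Mᴴ * M = V * Matrix.diagonal (RCLike.ofReal ∘ lam) * star V := by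
    have hs := hH.1.spectral_theorem; rwa [Unitary.conjStarAlgAut_apply] at hs
  have hsqrt : hH.sqrt = V * Matrix.diagonal ((↑) ∘ Real.sqrt ∘ lam) * star V := rfl
  set N : Matrix (Fin d) (Fin d) ℂ := M * V with hNdef
  have hNN : Nᴴ * N = Matrix.diagonal (fun j => ((lam j : ℝ) : ℂ)) := by
    have : Nᴴ * N = star V * (Mᴴ * M) * V := by
      simp [hNdef, Matrix.conjTranspose_mul, Matrix.mul_assoc, Matrix.star_eq_conjTranspose]
    rw [this, hspec]
    calc star V * (V * Matrix.diagonal (RCLike.ofReal ∘ lam) * star V) * V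
        = (star V * V) * Matrix.diagonal (RCLike.ofReal ∘ lam) * (star V * V) := by
          simp only [Matrix.mul_assoc]
      _ = Matrix.diagonal (fun j => ((lam j : ℝ) : ℂ)) := by
          rw [hV1']; simp [Function.comp]
  -- columns of N
  set E := EuclideanSpace ℂ (Fin d)
  set col : Fin d → E := fun j => (WithLp.equiv 2 (Fin d → ℂ)).symm (fun i => N i j) with hcol
  have hinner_col : ∀ j k, (inner ℂ (col j) (col k) : ℂ) = (Nᴴ * N) j k := by
    intro j k
    rw [PiLp.inner_apply]
    simp [hcol, Matrix.mul_apply, Matrix.conjTranspose_apply, RCLike.inner_apply, mul_comm]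
  have hlam_nonneg : ∀ j, 0 ≤ lam j := fun j => hH.eigenvalues_nonneg j
  set u : Fin d → E := fun j => ((Real.sqrt (lam j) : ℂ))⁻¹ • col j with hu
  set s : Set (Fin d) := {j | lam j ≠ 0} with hs
  have hon : Orthonormal ℂ (s.restrict u) := by
    rw [orthonormal_iff_ite]
    rintro ⟨j, hj⟩ ⟨k, hk⟩
    simp only [Set.restrict_apply, hu]
    change inner ℂ (((Real.sqrt (lam j) : ℂ))⁻¹ • col j) (((Real.sqrt (lam k) : ℂ))⁻¹ • col k) = _
    rw [inner_smul_left, inner_smul_right, hinner_col, hNN]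
    by_cases hjk : j = k
    · subst hjk
      simp only [Matrix.diagonal_apply_eq]
      rw [map_inv₀, Complex.conj_ofReal]
      have h1 : ((Real.sqrt (lam j) : ℂ))⁻¹ * (((Real.sqrt (lam j) : ℂ))⁻¹ * ((lam j : ℝ) : ℂ)) = 1 := by
        have hne : (Real.sqrt (lam j)) ≠ 0 := by
          simp [Real.sqrt_ne_zero' , lt_of_le_of_ne (hlam_nonneg j) (Ne.symm hj)]
        field_simp
        rw [← Complex.ofReal_pow, Real.sq_sqrt (hlam_nonneg j)]
      simp [h1]
    · have : (⟨j,hj⟩ : s) ≠ ⟨k,hk⟩ := by simpa using hjk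
      simp [Matrix.diagonal_apply_ne _ hjk, this]
  obtain ⟨b, hb⟩ := hon.exists_orthonormalBasis_extension_of_card_eq
    (by simp [E, finrank_euclideanSpace])
  set U' : Matrix (Fin d) (Fin d) ℂ := Matrix.of (fun i j => (b j) i) with hU'
  have hU'mem : U' ∈ Matrix.unitaryGroup (Fin d) ℂ := by
    rw [Matrix.mem_unitaryGroup_iff']
    ext j k
    have := (orthonormal_iff_ite (𝕜 := ℂ)).mp b.orthonormal j k
    rw [PiLp.inner_apply] at this
    simp only [RCLike.inner_apply] at this
    simp only [Matrix.mul_apply, Matrix.conjTranspose_apply, hU', Matrix.of_apply,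
      Matrix.one_apply, Matrix.star_apply, RCLike.star_def]
    rw [← this]; exact Finset.sum_congr rfl fun _ _ => mul_comm _ _
  have hU'D : U' * Matrix.diagonal (fun j => ((Real.sqrt (lam j) : ℝ) : ℂ)) = N := by
    ext i j
    rw [Matrix.mul_diagonal]
    by_cases hj : lam j = 0
    · have hcol0 : col j = 0 := by
        rw [← inner_self_eq_zero (𝕜 := ℂ)]
        rw [hinner_col, hNN]
        simp [hj]
      have hN0 : N i j = 0 := by
        have := congrFun (congrArg (WithLp.equiv 2 (Fin d → ℂ)) hcol0) i
        simpa [hcol] using this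
      simp [hj, hN0]
    · have hbj : b j = u j := hb j hj
      have hne : (Real.sqrt (lam j)) ≠ 0 := by
        simp [Real.sqrt_ne_zero', lt_of_le_of_ne (hlam_nonneg j) (Ne.symm hj)]
      have : (b j) i = ((Real.sqrt (lam j) : ℂ))⁻¹ * N i j := by
        rw [hbj]; simp only [hu, hcol, PiLp.smul_apply, smul_eq_mul]; rfl
      simp only [hU', Matrix.of_apply, this]
      field_simp
  refine ⟨U' * star V, ?_, ?_⟩
  · exact Submonoid.mul_mem _ hU'mem (Unitary.star_mem hVmem)
  · rw [hsqrt]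
    have hD : Matrix.diagonal ((↑) ∘ Real.sqrt ∘ lam : Fin d → ℂ)
        = Matrix.diagonal (fun j => ((Real.sqrt (lam j) : ℝ) : ℂ)) := by
      rfl
    calc M = N * star V := by rw [hNdef, Matrix.mul_assoc, hV1, Matrix.mul_one]
      _ = U' * Matrix.diagonal (fun j => ((Real.sqrt (lam j) : ℝ) : ℂ)) * star V := by
          rw [hU'D]
      _ = U' * star V * (V * Matrix.diagonal ((↑) ∘ Real.sqrt ∘ lam) * star V) := by
          rw [hD]
          simp only [← Matrix.mul_assoc]
          rw [Matrix.mul_assoc U' (star V) V, hV1', Matrix.mul_one]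

theorem psd_trace_bound {d : ℕ} {P W : Matrix (Fin d) (Fin d) ℂ}
    (hP : P.PosSemidef) (hW : W ∈ Matrix.unitaryGroup (Fin d) ℂ) :
    ((P * W).trace).re ≤ (P.trace).re := by
  classical
  set Q := hP.sqrt with hQdef
  have hQH : Qᴴ = Q := hP.posSemidef_sqrt.1
  have hQQ : Q * Q = P := hP.sqrt_mul_self
  have htr : (P * W).trace = (Q * (W * Q)).trace := by
    rw [← hQQ, Matrix.mul_assoc, Matrix.trace_mul_comm, Matrix.mul_assoc]
  set E := EuclideanSpace ℂ (Fin d)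
  set q : Fin d → E := fun i => (WithLp.equiv 2 (Fin d → ℂ)).symm (fun j => Q j i) with hq
  set w : Fin d → E := fun i => (WithLp.equiv 2 (Fin d → ℂ)).symm (fun j => (W * Q) j i) with hw
  have hdiag : ∀ i, (Q * (W * Q)) i i = inner ℂ (q i) (w i) := by
    intro i
    rw [PiLp.inner_apply]
    simp only [RCLike.inner_apply, hq, hw, WithLp.equiv_symm_apply, PiLp.toLp_apply]
    rw [Matrix.mul_apply]
    congr 1; ext j
    have : (starRingEnd ℂ) (Q j i) = Q i j := by
      rw [show (starRingEnd ℂ) (Q j i) = Qᴴ i j from rfl, hQH]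
    simp [this, mul_comm]
  have key : ∀ (X : Matrix (Fin d) (Fin d) ℂ) i,
      (∑ j, (starRingEnd ℂ) (X j i) * X j i) = (Xᴴ * X) i i := by
    intro X i; rw [Matrix.mul_apply]; simp [Matrix.conjTranspose_apply]
  have hqq : ∀ i, (inner ℂ (q i) (q i) : ℂ) = P i i := by
    intro i
    rw [PiLp.inner_apply]
    simp only [RCLike.inner_apply, hq, WithLp.equiv_symm_apply, PiLp.toLp_apply]
    simp only [mul_comm _ ((starRingEnd ℂ) _), key Q i]
    rw [hQH, hQQ]
  have hnorm : ∀ i, ‖w i‖ = ‖q i‖ := by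
    intro i
    have h1 : (inner ℂ (w i) (w i) : ℂ) = inner ℂ (q i) (q i) := by
      rw [PiLp.inner_apply, PiLp.inner_apply]
      simp only [RCLike.inner_apply, hq, hw, WithLp.equiv_symm_apply, PiLp.toLp_apply]
      have hWW : Wᴴ * W = 1 := (Matrix.mem_unitaryGroup_iff').mp hW
      simp only [mul_comm _ ((starRingEnd ℂ) _), key (W * Q), key Q]
      rw [Matrix.conjTranspose_mul, Matrix.mul_assoc, ← Matrix.mul_assoc Wᴴ, hWW,
        Matrix.one_mul]
    rw [inner_self_eq_norm_sq_to_K (𝕜 := ℂ), inner_self_eq_norm_sq_to_K (𝕜 := ℂ)] at h1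
    have h2 : (‖w i‖ : ℝ) ^ 2 = ‖q i‖ ^ 2 := by exact_mod_cast h1
    rw [← Real.sqrt_sq (norm_nonneg (w i)), ← Real.sqrt_sq (norm_nonneg (q i)), h2]
  calc ((P * W).trace).re = ∑ i, RCLike.re (inner ℂ (q i) (w i) : ℂ) := by
        rw [htr, Matrix.trace, Complex.re_sum]
        exact Finset.sum_congr rfl fun i _ => by rw [Matrix.diag_apply, hdiag]; rfl
    _ ≤ ∑ i, ‖q i‖ * ‖w i‖ := Finset.sum_le_sum fun i _ => re_inner_le_norm _ _
    _ = ∑ i, RCLike.re (inner ℂ (q i) (q i) : ℂ) := by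
        refine Finset.sum_congr rfl fun i _ => ?_
        rw [hnorm i, inner_self_eq_norm_mul_norm (𝕜 := ℂ) (q i)]
    _ = (P.trace).re := by
        rw [Matrix.trace, Complex.re_sum]
        exact Finset.sum_congr rfl fun i _ => by rw [hqq i, Matrix.diag_apply]; rfl

theorem re_trace_mul_unitary_le {d : ℕ} (M : Matrix (Fin d) (Fin d) ℂ)
    {W : Matrix (Fin d) (Fin d) ℂ} (hW : W ∈ Matrix.unitaryGroup (Fin d) ℂ) :
    ((M * W).trace).re ≤ ((Matrix.posSemidef_conjTranspose_mul_self M).sqrt).trace.re := by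
  obtain ⟨U, hU, hMU⟩ := polar_decomp M
  set P := (Matrix.posSemidef_conjTranspose_mul_self M).sqrt
  have h1 : (M * W).trace = (P * (W * U)).trace := by
    rw [hMU, Matrix.mul_assoc, Matrix.trace_mul_comm U, Matrix.mul_assoc]
  rw [h1]
  exact psd_trace_bound (Matrix.posSemidef_conjTranspose_mul_self M).posSemidef_sqrt
    (Submonoid.mul_mem _ hW hU)

theorem re_trace_attain {d : ℕ} (M : Matrix (Fin d) (Fin d) ℂ) :
    ∃ W ∈ Matrix.unitaryGroup (Fin d) ℂ,
      ((M * W).trace) = ((Matrix.posSemidef_conjTranspose_mul_self M).sqrt).trace := by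
  obtain ⟨U, hU, hMU⟩ := polar_decomp M
  set P := (Matrix.posSemidef_conjTranspose_mul_self M).sqrt
  refine ⟨star U, Unitary.star_mem hU, ?_⟩
  rw [hMU, Matrix.mul_assoc, Matrix.trace_mul_comm U, Matrix.mul_assoc,
    (Matrix.mem_unitaryGroup_iff').mp hU, Matrix.mul_one]

/-- Embedding of matrices into Euclidean space (Frobenius structure). -/
noncomputable def emb {d : ℕ} (M : Matrix (Fin d) (Fin d) ℂ) :
    EuclideanSpace ℂ (Fin d × Fin d) :=
  (WithLp.equiv 2 (Fin d × Fin d → ℂ)).symm (fun p => M p.1 p.2)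

theorem inner_emb {d : ℕ} (M N : Matrix (Fin d) (Fin d) ℂ) :
    (inner ℂ (emb M) (emb N) : ℂ) = (Mᴴ * N).trace := by
  rw [PiLp.inner_apply]
  simp only [RCLike.inner_apply, emb, WithLp.equiv_symm_apply, PiLp.toLp_apply]
  rw [Matrix.trace]
  rw [Fintype.sum_prod_type]
  rw [Finset.sum_comm]
  refine Finset.sum_congr rfl fun j _ => ?_
  rw [Matrix.diag_apply, Matrix.mul_apply]
  exact Finset.sum_congr rfl fun i _ => by rw [Matrix.conjTranspose_apply, mul_comm]; rfl

theorem emb_sub {d : ℕ} (M N : Matrix (Fin d) (Fin d) ℂ) :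
    emb M - emb N = emb (M - N) := by
  ext p
  simp [emb, WithLp.equiv_symm_apply, PiLp.toLp_apply]

theorem fid_eq {d : ℕ} {σ ρ : Matrix (Fin d) (Fin d) ℂ} (hσ : σ.PosSemidef) (hρ : ρ.PosSemidef) :
    fid σ ρ = ((Matrix.posSemidef_conjTranspose_mul_self (hσ.sqrt * hρ.sqrt)).sqrt).trace.re := by
  have h1 : matSqrt σ = hσ.sqrt := by rw [matSqrt, dif_pos hσ]; rfl
  have h2 : matSqrt ρ = hρ.sqrt := by rw [matSqrt, dif_pos hρ]; rfl
  rw [fid, h1, h2, matAbs, matSqrt,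
    dif_pos (Matrix.posSemidef_conjTranspose_mul_self (hσ.sqrt * hρ.sqrt))]
  rfl

theorem trace_key {d : ℕ} (G H : Matrix (Fin d) (Fin d) ℂ) {W : Matrix (Fin d) (Fin d) ℂ}
    (hW : W ∈ Matrix.unitaryGroup (Fin d) ℂ) :
    ((Wᴴ * G) * (H * W)).trace = (G * H).trace := by
  have h1 : W * Wᴴ = 1 := (Matrix.mem_unitaryGroup_iff).mp hW
  rw [Matrix.mul_assoc, Matrix.trace_mul_comm, Matrix.mul_assoc, Matrix.mul_assoc, h1,
    Matrix.mul_one, Matrix.trace_mul_comm]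

/-- the Bures distance satisfies the triangle inequality on density matrices. -/
theorem bures_triangle {d : ℕ} (σ θ ρ : Matrix (Fin d) (Fin d) ℂ)
    (hσ : σ.PosSemidef) (hθ : θ.PosSemidef) (hρ : ρ.PosSemidef)
    (hσ1 : σ.trace = 1) (hθ1 : θ.trace = 1) (hρ1 : ρ.trace = 1) :
    dB σ ρ ≤ dB σ θ + dB θ ρ := by
  classical
  set A := hσ.sqrt with hA
  set B := hθ.sqrt with hB
  set C := hρ.sqrt with hC
  have hAH : Aᴴ = A := hσ.posSemidef_sqrt.1
  have hBH : Bᴴ = B := hθ.posSemidef_sqrt.1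
  have hCH : Cᴴ = C := hρ.posSemidef_sqrt.1
  have hAA : A * A = σ := hσ.sqrt_mul_self
  have hBB : B * B = θ := hθ.sqrt_mul_self
  have hCC : C * C = ρ := hρ.sqrt_mul_self
  obtain ⟨W₁, hW₁, hat1⟩ := re_trace_attain (A * B)
  obtain ⟨W₂, hW₂, hat2⟩ := re_trace_attain (B * C)
  have hW₂₁ : W₂ * W₁ ∈ Matrix.unitaryGroup (Fin d) ℂ := Submonoid.mul_mem _ hW₂ hW₁
  set X := emb A with hX
  set Y := emb (B * W₁) with hY
  set Z := emb (C * (W₂ * W₁)) with hZ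
  -- inner products
  have hXY : RCLike.re (inner ℂ X Y : ℂ) = fid σ θ := by
    rw [hX, hY, inner_emb, hAH, ← Matrix.mul_assoc, hat1, fid_eq hσ hθ]; rfl
  have hYZ : RCLike.re (inner ℂ Y Z : ℂ) = fid θ ρ := by
    rw [hY, hZ, inner_emb, Matrix.conjTranspose_mul, hBH,
      show C * (W₂ * W₁) = (C * W₂) * W₁ by rw [Matrix.mul_assoc],
      trace_key B (C * W₂) hW₁, ← Matrix.mul_assoc, hat2, fid_eq hθ hρ]
    rfl
  have hXZ : RCLike.re (inner ℂ X Z : ℂ) ≤ fid σ ρ := by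
    rw [hX, hZ, inner_emb, hAH, ← Matrix.mul_assoc, fid_eq hσ hρ]
    exact re_trace_mul_unitary_le (A * C) hW₂₁
  -- norms
  have hnX : ‖X‖ ^ 2 = 1 := by
    rw [← @inner_self_eq_norm_sq ℂ, hX, inner_emb, hAH, hAA, hσ1]
    rfl
  have hnY : ‖Y‖ ^ 2 = 1 := by
    rw [← @inner_self_eq_norm_sq ℂ, hY, inner_emb, Matrix.conjTranspose_mul, hBH,
      trace_key B B hW₁, hBB, hθ1]
    rfl
  have hnZ : ‖Z‖ ^ 2 = 1 := by
    rw [← @inner_self_eq_norm_sq ℂ, hZ, inner_emb, Matrix.conjTranspose_mul, hCH,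
      trace_key C C hW₂₁, hCC, hρ1]
    rfl
  -- squared distances
  have hsXY : ‖X - Y‖ ^ 2 = 2 * (1 - fid σ θ) := by
    rw [@norm_sub_sq ℂ, hnX, hnY, hXY]; ring
  have hsYZ : ‖Y - Z‖ ^ 2 = 2 * (1 - fid θ ρ) := by
    rw [@norm_sub_sq ℂ, hnY, hnZ, hYZ]; ring
  have hsXZ : ‖X - Z‖ ^ 2 ≥ 2 * (1 - fid σ ρ) := by
    rw [@norm_sub_sq ℂ, hnX, hnZ]
    nlinarith [hXZ]
  -- convert dB to norms
  have sqrt2_pos : (0:ℝ) < Real.sqrt 2 := Real.sqrt_pos.mpr (by norm_num)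
  have hdXY : dB σ θ = ‖X - Y‖ / Real.sqrt 2 := by
    rw [dB, show (1 - fid σ θ) = ‖X - Y‖ ^ 2 / 2 by rw [hsXY]; ring,
      Real.sqrt_div (sq_nonneg _), Real.sqrt_sq (norm_nonneg _)]
  have hdYZ : dB θ ρ = ‖Y - Z‖ / Real.sqrt 2 := by
    rw [dB, show (1 - fid θ ρ) = ‖Y - Z‖ ^ 2 / 2 by rw [hsYZ]; ring,
      Real.sqrt_div (sq_nonneg _), Real.sqrt_sq (norm_nonneg _)]
  have hdXZ : dB σ ρ ≤ ‖X - Z‖ / Real.sqrt 2 := by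
    rw [dB, show ‖X - Z‖ / Real.sqrt 2 = Real.sqrt (‖X - Z‖ ^ 2 / 2) by
      rw [Real.sqrt_div (sq_nonneg _), Real.sqrt_sq (norm_nonneg _)]]
    exact Real.sqrt_le_sqrt (by linarith [hsXZ])
  calc dB σ ρ ≤ ‖X - Z‖ / Real.sqrt 2 := hdXZ
    _ ≤ (‖X - Y‖ + ‖Y - Z‖) / Real.sqrt 2 := by
        gcongr
        exact norm_sub_le_norm_sub_add_norm_sub X Y Z
    _ = dB σ θ + dB θ ρ := by rw [hdXY, hdYZ, add_div]
end

section
/- (Fuchs–van de Graaf inequality) For density matrices σ, ρ, the fidelity F(ρ,σ) = tr(|ρ^{1/2}σ^{1/2}|) and the trace distance satisfy 1 − (1/2)‖ρ−σ‖₁ ≤ F(ρ,σ) ≤ √(1 − (1/4)‖ρ−σ‖₁²), where ‖x‖₁ = tr(|x|). -/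
open scoped Matrix ComplexOrder
open Matrix

variable {d : ℕ}

open scoped MatrixOrder in
lemma matSqrt_of_psd {x : Matrix (Fin d) (Fin d) ℂ} (h : x.PosSemidef) :
    matSqrt x = CFC.sqrt x := by
  rw [CFC.sqrt_eq_real_sqrt x h.nonneg, cfcₙ_eq_cfc, h.1.cfc_eq, Matrix.IsHermitian.cfc, Unitary.conjStarAlgAut_apply]
  exact dif_pos h

open scoped MatrixOrder in
lemma matSqrt_posSemidef {x : Matrix (Fin d) (Fin d) ℂ} (h : x.PosSemidef) :
    (matSqrt x).PosSemidef := by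
  rw [matSqrt_of_psd h]; exact (CFC.sqrt_nonneg x).posSemidef

open scoped MatrixOrder in
lemma matSqrt_mul_self {x : Matrix (Fin d) (Fin d) ℂ} (h : x.PosSemidef) :
    matSqrt x * matSqrt x = x := by
  rw [matSqrt_of_psd h]; exact CFC.sqrt_mul_sqrt_self x h.nonneg

lemma matSqrt_herm {x : Matrix (Fin d) (Fin d) ℂ} (h : x.PosSemidef) :
    (matSqrt x)ᴴ = matSqrt x := (matSqrt_posSemidef h).1

lemma matAbs_posSemidef (x : Matrix (Fin d) (Fin d) ℂ) : (matAbs x).PosSemidef :=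
  matSqrt_posSemidef (posSemidef_conjTranspose_mul_self x)

lemma matAbs_mul_self (x : Matrix (Fin d) (Fin d) ℂ) : matAbs x * matAbs x = xᴴ * x :=
  matSqrt_mul_self (posSemidef_conjTranspose_mul_self x)

open scoped MatrixOrder in
lemma matAbs_eq {x P : Matrix (Fin d) (Fin d) ℂ} (hP : P.PosSemidef)
    (h : P * P = xᴴ * x) : matAbs x = P := by
  rw [matAbs, matSqrt_of_psd (posSemidef_conjTranspose_mul_self x)]
  exact CFC.sqrt_unique h hP.nonneg



/-- Real part of the Frobenius inner product. -/
noncomputable def frob (X Y : Matrix (Fin d) (Fin d) ℂ) : ℝ := ((Xᴴ * Y).trace).re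

noncomputable def fnorm (X : Matrix (Fin d) (Fin d) ℂ) : ℝ := Real.sqrt (frob X X)

lemma trace_conjTranspose_mul (X Y : Matrix (Fin d) (Fin d) ℂ) :
    (Xᴴ * Y).trace = ∑ i, ∑ j, (starRingEnd ℂ) (X j i) * Y j i := by
  simp [Matrix.trace, Matrix.diag, Matrix.mul_apply, Matrix.conjTranspose_apply]

lemma frob_self_eq (X : Matrix (Fin d) (Fin d) ℂ) :
    frob X X = ∑ i, ∑ j, ‖X j i‖ ^ 2 := by
  rw [frob, trace_conjTranspose_mul, Complex.re_sum]
  refine Finset.sum_congr rfl fun i _ => ?_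
  rw [Complex.re_sum]
  refine Finset.sum_congr rfl fun j _ => ?_
  rw [mul_comm, Complex.mul_conj]
  simp [Complex.sq_norm]

lemma frob_self_nonneg (X : Matrix (Fin d) (Fin d) ℂ) : 0 ≤ frob X X := by
  rw [frob_self_eq]; positivity

lemma fnorm_sq (X : Matrix (Fin d) (Fin d) ℂ) : fnorm X ^ 2 = frob X X :=
  Real.sq_sqrt (frob_self_nonneg X)

lemma frob_le (X Y : Matrix (Fin d) (Fin d) ℂ) : frob X Y ≤ fnorm X * fnorm Y := by
  have h1 : frob X Y ≤ ∑ i, ∑ j, ‖X j i‖ * ‖Y j i‖ := by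
    rw [frob, trace_conjTranspose_mul, Complex.re_sum]
    refine Finset.sum_le_sum fun i _ => ?_
    rw [Complex.re_sum]
    refine Finset.sum_le_sum fun j _ => ?_
    calc ((starRingEnd ℂ) (X j i) * Y j i).re ≤ ‖(starRingEnd ℂ) (X j i) * Y j i‖ :=
          Complex.re_le_norm _
    _ = ‖X j i‖ * ‖Y j i‖ := by rw [norm_mul, RCLike.norm_conj]
  refine h1.trans ?_
  have h2 : ∑ i, ∑ j, ‖X j i‖ * ‖Y j i‖
      = ∑ p : Fin d × Fin d, ‖X p.2 p.1‖ * ‖Y p.2 p.1‖ := by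
    rw [Fintype.sum_prod_type]
  have h3 : frob X X = ∑ p : Fin d × Fin d, ‖X p.2 p.1‖ ^ 2 := by
    rw [frob_self_eq, Fintype.sum_prod_type]
  have h4 : frob Y Y = ∑ p : Fin d × Fin d, ‖Y p.2 p.1‖ ^ 2 := by
    rw [frob_self_eq, Fintype.sum_prod_type]
  rw [h2, fnorm, fnorm, h3, h4]
  exact Real.sum_mul_le_sqrt_mul_sqrt _ _ _

lemma frob_unitary_left {W : Matrix (Fin d) (Fin d) ℂ} (hW : Wᴴ * W = 1)
    (X : Matrix (Fin d) (Fin d) ℂ) : frob (W * X) (W * X) = frob X X := by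
  unfold frob
  rw [conjTranspose_mul, Matrix.mul_assoc, ← Matrix.mul_assoc Wᴴ, hW, Matrix.one_mul]

lemma fnorm_unitary_left {W : Matrix (Fin d) (Fin d) ℂ} (hW : Wᴴ * W = 1)
    (X : Matrix (Fin d) (Fin d) ℂ) : fnorm (W * X) = fnorm X := by
  rw [fnorm, frob_unitary_left hW, fnorm]

/-- diagonal entries of PSD matrices -/
lemma psd_diag (hP : (P : Matrix (Fin d) (Fin d) ℂ).PosSemidef) (i : Fin d) :
    0 ≤ P i i := by
  have := hP.2 (Finsupp.single i 1)
  simpa [dotProduct, Matrix.mulVec, Pi.single_apply, Finset.sum_ite_eq,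
    Finset.sum_ite_eq'] using this

lemma psd_diag_re (hP : (P : Matrix (Fin d) (Fin d) ℂ).PosSemidef) (i : Fin d) :
    0 ≤ (P i i).re := by
  have := psd_diag hP i
  rw [Complex.le_def] at this
  exact this.1

lemma psd_trace_re_nonneg (hP : (P : Matrix (Fin d) (Fin d) ℂ).PosSemidef) :
    0 ≤ P.trace.re := by
  rw [Matrix.trace, Complex.re_sum]
  exact Finset.sum_nonneg fun i _ => psd_diag_re hP i


lemma unitary_conj_mul {V : Matrix (Fin d) (Fin d) ℂ} (hV : Vᴴ * V = 1)
    (A B : Matrix (Fin d) (Fin d) ℂ) :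
    (V * A * Vᴴ) * (V * B * Vᴴ) = V * (A * B) * Vᴴ := by
  calc (V * A * Vᴴ) * (V * B * Vᴴ) = V * (A * ((Vᴴ * V) * (B * Vᴴ))) := by
        simp only [Matrix.mul_assoc]
  _ = V * (A * B) * Vᴴ := by rw [hV, Matrix.one_mul]; simp only [Matrix.mul_assoc]

lemma trace_unitary_conj {V : Matrix (Fin d) (Fin d) ℂ} (hV : Vᴴ * V = 1)
    (A : Matrix (Fin d) (Fin d) ℂ) : (V * A * Vᴴ).trace = A.trace := by
  rw [Matrix.trace_mul_cycle, hV, Matrix.one_mul]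

lemma matAbs_conj_diag {V : Matrix (Fin d) (Fin d) ℂ} (hV : Vᴴ * V = 1)
    {H : Matrix (Fin d) (Fin d) ℂ} (hH : H.IsHermitian) {lam : Fin d → ℝ}
    (hspec : H = V * Matrix.diagonal (fun i => (lam i : ℂ)) * Vᴴ) :
    matAbs H = V * Matrix.diagonal (fun i => ((|lam i| : ℝ) : ℂ)) * Vᴴ := by
  refine matAbs_eq ?_ ?_
  · refine Matrix.PosSemidef.mul_mul_conjTranspose_same ?_ V
    refine Matrix.PosSemidef.diagonal fun i => ?_
    show (0:ℂ) ≤ _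
    exact Complex.zero_le_real.mpr (abs_nonneg _)
  · rw [unitary_conj_mul hV, Matrix.diagonal_mul_diagonal]
    have hH' : Hᴴ = H := hH
    rw [hH']
    conv_rhs => rw [hspec, unitary_conj_mul hV, Matrix.diagonal_mul_diagonal]
    have h2 : (fun i => (((|lam i| : ℝ) : ℂ) * ((|lam i| : ℝ) : ℂ)))
        = (fun i => (((lam i : ℝ) : ℂ) * ((lam i : ℝ) : ℂ))) := by
      funext i
      rw [← Complex.ofReal_mul, ← Complex.ofReal_mul, abs_mul_abs_self]
    rw [h2]

/-- packaged spectral decomposition of a Hermitian matrix, with trace of abs -/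
lemma herm_package {H : Matrix (Fin d) (Fin d) ℂ} (hH : H.IsHermitian) :
    ∃ (V : Matrix (Fin d) (Fin d) ℂ) (lam : Fin d → ℝ),
      Vᴴ * V = 1 ∧ V * Vᴴ = 1 ∧ H = V * Matrix.diagonal (fun i => (lam i : ℂ)) * Vᴴ ∧
      (matAbs H).trace.re = ∑ i, |lam i| := by
  refine ⟨(hH.eigenvectorUnitary : Matrix (Fin d) (Fin d) ℂ), hH.eigenvalues, ?_, ?_, ?_, ?_⟩
  · rw [← Matrix.star_eq_conjTranspose]
    exact Matrix.mem_unitaryGroup_iff'.mp hH.eigenvectorUnitary.2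
  · rw [← Matrix.star_eq_conjTranspose]
    exact Matrix.mem_unitaryGroup_iff.mp hH.eigenvectorUnitary.2
  · rw [← Matrix.star_eq_conjTranspose]
    exact hH.spectral_theorem
  · have hV : (hH.eigenvectorUnitary : Matrix (Fin d) (Fin d) ℂ)ᴴ
        * (hH.eigenvectorUnitary : Matrix (Fin d) (Fin d) ℂ) = 1 := by
      rw [← Matrix.star_eq_conjTranspose]
      exact Matrix.mem_unitaryGroup_iff'.mp hH.eigenvectorUnitary.2
    have hs : H = (hH.eigenvectorUnitary : Matrix (Fin d) (Fin d) ℂ)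
        * Matrix.diagonal (fun i => (hH.eigenvalues i : ℂ))
        * (hH.eigenvectorUnitary : Matrix (Fin d) (Fin d) ℂ)ᴴ := by
      rw [← Matrix.star_eq_conjTranspose]
      exact hH.spectral_theorem
    rw [matAbs_conj_diag hV hH hs, trace_unitary_conj hV, Matrix.trace_diagonal,
      Complex.re_sum]
    exact Finset.sum_congr rfl fun i _ => Complex.ofReal_re _

/-- packaged spectral decomposition of a PSD matrix -/
lemma psd_package {P : Matrix (Fin d) (Fin d) ℂ} (hP : P.PosSemidef) :
    ∃ (V : Matrix (Fin d) (Fin d) ℂ) (lam : Fin d → ℝ),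
      Vᴴ * V = 1 ∧ V * Vᴴ = 1 ∧ P = V * Matrix.diagonal (fun i => (lam i : ℂ)) * Vᴴ ∧
      (∀ i, 0 ≤ lam i) ∧ P.trace.re = ∑ i, lam i := by
  refine ⟨(hP.1.eigenvectorUnitary : Matrix (Fin d) (Fin d) ℂ), hP.1.eigenvalues, ?_, ?_, ?_,
    hP.eigenvalues_nonneg, ?_⟩
  · rw [← Matrix.star_eq_conjTranspose]
    exact Matrix.mem_unitaryGroup_iff'.mp hP.1.eigenvectorUnitary.2
  · rw [← Matrix.star_eq_conjTranspose]
    exact Matrix.mem_unitaryGroup_iff.mp hP.1.eigenvectorUnitary.2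
  · rw [← Matrix.star_eq_conjTranspose]
    exact hP.1.spectral_theorem
  · have hV : (hP.1.eigenvectorUnitary : Matrix (Fin d) (Fin d) ℂ)ᴴ
        * (hP.1.eigenvectorUnitary : Matrix (Fin d) (Fin d) ℂ) = 1 := by
      rw [← Matrix.star_eq_conjTranspose]
      exact Matrix.mem_unitaryGroup_iff'.mp hP.1.eigenvectorUnitary.2
    conv_lhs => rw [show P = (hP.1.eigenvectorUnitary : Matrix (Fin d) (Fin d) ℂ)
        * Matrix.diagonal (fun i => (hP.1.eigenvalues i : ℂ))
        * (hP.1.eigenvectorUnitary : Matrix (Fin d) (Fin d) ℂ)ᴴ from by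
      rw [← Matrix.star_eq_conjTranspose]; exact hP.1.spectral_theorem]
    rw [trace_unitary_conj hV, Matrix.trace_diagonal, Complex.re_sum]
    exact Finset.sum_congr rfl fun i _ => Complex.ofReal_re _

lemma exists_unitary_trace_abs {H : Matrix (Fin d) (Fin d) ℂ} (hH : H.IsHermitian) :
    ∃ W : Matrix (Fin d) (Fin d) ℂ,
      Wᴴ * W = 1 ∧ (W * H).trace.re = (matAbs H).trace.re := by
  obtain ⟨V, lam, hV1, hV2, hspec, htr⟩ := herm_package hH
  set s : Fin d → ℂ := fun i => if lam i < 0 then -1 else 1 with hs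
  refine ⟨V * Matrix.diagonal s * Vᴴ, ?_, ?_⟩
  · have h1 : (V * Matrix.diagonal s * Vᴴ)ᴴ = V * Matrix.diagonal (star s) * Vᴴ := by
      simp only [Matrix.conjTranspose_mul, Matrix.conjTranspose_conjTranspose,
        Matrix.diagonal_conjTranspose]
      rw [Matrix.mul_assoc]
    rw [h1, unitary_conj_mul hV1, Matrix.diagonal_mul_diagonal]
    have h2 : (fun i => star s i * s i) = fun _ => (1:ℂ) := by
      funext i
      simp only [hs]
      by_cases hi : lam i < 0 <;> simp [hi]
    rw [show (Matrix.diagonal fun i => star s i * s i)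
        = (Matrix.diagonal fun _ => (1:ℂ)) from by rw [h2]]
    rw [Matrix.diagonal_one, Matrix.mul_one, hV2]
  · conv_lhs => rw [hspec, unitary_conj_mul hV1, Matrix.diagonal_mul_diagonal]
    rw [trace_unitary_conj hV1, htr, Matrix.trace_diagonal, Complex.re_sum]
    refine Finset.sum_congr rfl fun i _ => ?_
    simp only [Pi.mul_apply, hs]
    by_cases hi : lam i < 0
    · simp [hi, abs_of_neg hi]
    · simp [hi, abs_of_nonneg (not_lt.mp hi)]

lemma diag_sum_le {H : Matrix (Fin d) (Fin d) ℂ} (hH : H.IsHermitian)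
    {C : Matrix (Fin d) (Fin d) ℂ} (hC : Cᴴ * C = 1) :
    ∑ i, |((Cᴴ * H * C) i i).re| ≤ (matAbs H).trace.re := by
  obtain ⟨V, lam, hV1, hV2, hspec, htr⟩ := herm_package hH
  set lp : Fin d → ℝ := fun i => max (lam i) 0 with hlp
  set lm : Fin d → ℝ := fun i => max (-(lam i)) 0 with hlm
  set Pp : Matrix (Fin d) (Fin d) ℂ := V * Matrix.diagonal (fun i => (lp i : ℂ)) * Vᴴ with hPp
  set Pm : Matrix (Fin d) (Fin d) ℂ := V * Matrix.diagonal (fun i => (lm i : ℂ)) * Vᴴ with hPm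
  have hPpPSD : Pp.PosSemidef := by
    refine Matrix.PosSemidef.mul_mul_conjTranspose_same ?_ V
    exact Matrix.PosSemidef.diagonal fun i =>
      (by show (0:ℂ) ≤ _; exact Complex.zero_le_real.mpr (le_max_right _ _))
  have hPmPSD : Pm.PosSemidef := by
    refine Matrix.PosSemidef.mul_mul_conjTranspose_same ?_ V
    exact Matrix.PosSemidef.diagonal fun i =>
      (by show (0:ℂ) ≤ _; exact Complex.zero_le_real.mpr (le_max_right _ _))
  have hfun : (fun i => ((lam i : ℝ) : ℂ)) = (fun i => ((lp i : ℝ) : ℂ) - ((lm i : ℝ) : ℂ)) := by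
    funext i
    rw [← Complex.ofReal_sub]
    congr 1
    show lam i = max (lam i) 0 - max (-(lam i)) 0
    rcases le_total (lam i) 0 with hi | hi
    · rw [max_eq_right hi, max_eq_left (neg_nonneg.mpr hi)]; ring
    · rw [max_eq_left hi, max_eq_right (neg_nonpos.mpr hi)]; ring
  have hsplit : H = Pp - Pm := by
    rw [hPp, hPm, ← Matrix.sub_mul, ← Matrix.mul_sub, Matrix.diagonal_sub, hspec, hfun]
  have key : ∀ i, |((Cᴴ * H * C) i i).re|
      ≤ ((Cᴴ * Pp * C) i i).re + ((Cᴴ * Pm * C) i i).re := by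
    intro i
    have h1 : 0 ≤ ((Cᴴ * Pp * C) i i).re := psd_diag_re (hPpPSD.conjTranspose_mul_mul_same C) i
    have h2 : 0 ≤ ((Cᴴ * Pm * C) i i).re := psd_diag_re (hPmPSD.conjTranspose_mul_mul_same C) i
    have hsub : (Cᴴ * H * C) i i = (Cᴴ * Pp * C) i i - (Cᴴ * Pm * C) i i := by
      rw [hsplit]
      simp [Matrix.mul_sub, Matrix.sub_mul]
    rw [hsub, Complex.sub_re]
    calc |((Cᴴ * Pp * C) i i).re - ((Cᴴ * Pm * C) i i).re|
        ≤ |((Cᴴ * Pp * C) i i).re| + |((Cᴴ * Pm * C) i i).re| := abs_sub _ _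
    _ = _ := by rw [abs_of_nonneg h1, abs_of_nonneg h2]
  calc ∑ i, |((Cᴴ * H * C) i i).re|
      ≤ ∑ i, (((Cᴴ * Pp * C) i i).re + ((Cᴴ * Pm * C) i i).re) :=
        Finset.sum_le_sum fun i _ => key i
  _ = (Cᴴ * Pp * C).trace.re + (Cᴴ * Pm * C).trace.re := by
      rw [Finset.sum_add_distrib, Matrix.trace, Matrix.trace, Complex.re_sum, Complex.re_sum]
      rfl
  _ = Pp.trace.re + Pm.trace.re := by
      have hCC : C * Cᴴ = 1 := mul_eq_one_comm.mp hC
      have e : ∀ P : Matrix (Fin d) (Fin d) ℂ, (Cᴴ * P * C).trace = P.trace := by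
        intro P
        rw [Matrix.trace_mul_cycle, hCC, Matrix.one_mul]
      rw [e, e]
  _ = (matAbs H).trace.re := by
      rw [htr, hPp, hPm, trace_unitary_conj hV1, trace_unitary_conj hV1,
        Matrix.trace_diagonal, Matrix.trace_diagonal,
        Complex.re_sum, Complex.re_sum, ← Finset.sum_add_distrib]
      refine Finset.sum_congr rfl fun i _ => ?_
      simp only [Complex.ofReal_re, hlp, hlm]
      rcases le_total (lam i) 0 with hi | hi
      · rw [max_eq_right hi, max_eq_left (neg_nonneg.mpr hi), abs_of_nonpos hi]; ring
      · rw [max_eq_left hi, max_eq_right (neg_nonpos.mpr hi), abs_of_nonneg hi]; ring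


lemma unitary_diag_re_le_one {C : Matrix (Fin d) (Fin d) ℂ} (hC : Cᴴ * C = 1) (i : Fin d) :
    (C i i).re ≤ 1 := by
  have h1 : (Cᴴ * C) i i = 1 := by rw [hC]; simp [Matrix.one_apply]
  have h2 : ∑ j, Complex.normSq (C j i) = 1 := by
    have h := congrArg Complex.re h1
    rw [Matrix.mul_apply, Complex.re_sum, Complex.one_re] at h
    rw [← h]
    refine Finset.sum_congr rfl fun j _ => ?_
    rw [Matrix.conjTranspose_apply]
    rw [show (star (C j i) * C j i : ℂ) = ((Complex.normSq (C j i) : ℝ) : ℂ) from by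
      rw [Complex.normSq_eq_conj_mul_self]; rfl]
    simp
  have h3 : Complex.normSq (C i i) ≤ 1 := by
    rw [← h2]
    exact Finset.single_le_sum (f := fun j => Complex.normSq (C j i))
      (fun j _ => Complex.normSq_nonneg _) (Finset.mem_univ i)
  calc (C i i).re ≤ ‖C i i‖ := Complex.re_le_norm _
  _ ≤ 1 := by
      rw [← Real.sqrt_one, Complex.norm_def]
      exact Real.sqrt_le_sqrt h3

lemma trace_unitary_mul_psd_le {P W : Matrix (Fin d) (Fin d) ℂ}
    (hP : P.PosSemidef) (hW : Wᴴ * W = 1) : ((W * P).trace).re ≤ P.trace.re := by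
  obtain ⟨V, lam, hV1, hV2, hspec, hnn, htr⟩ := psd_package hP
  set Cm : Matrix (Fin d) (Fin d) ℂ := Vᴴ * W * V with hCm
  have hCmu : Cmᴴ * Cm = 1 := by
    rw [hCm]
    simp only [Matrix.conjTranspose_mul, Matrix.conjTranspose_conjTranspose, Matrix.mul_assoc]
    rw [← Matrix.mul_assoc V Vᴴ, hV2, Matrix.one_mul, ← Matrix.mul_assoc Wᴴ W, hW,
      Matrix.one_mul, hV1]
  have htrace : (W * P).trace = (Cm * Matrix.diagonal (fun i => (lam i : ℂ))).trace := by
    rw [hspec, hCm]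
    rw [show W * (V * Matrix.diagonal (fun i => (lam i : ℂ)) * Vᴴ)
        = (W * V * Matrix.diagonal (fun i => (lam i : ℂ))) * Vᴴ from by
      simp only [Matrix.mul_assoc]]
    rw [Matrix.trace_mul_comm, ← Matrix.mul_assoc, ← Matrix.mul_assoc]
  rw [htrace, htr]
  have hdiag : (Cm * Matrix.diagonal (fun i => (lam i : ℂ))).trace
      = ∑ i, Cm i i * (lam i : ℂ) := by
    rw [Matrix.trace]
    refine Finset.sum_congr rfl fun i _ => ?_
    rw [Matrix.diag_apply, Matrix.mul_diagonal]
  rw [hdiag, Complex.re_sum]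
  refine Finset.sum_le_sum fun i _ => ?_
  have hre : (Cm i i * (lam i : ℂ)).re = (Cm i i).re * lam i := by
    rw [Complex.mul_re, Complex.ofReal_re, Complex.ofReal_im]
    ring
  rw [hre]
  calc (Cm i i).re * lam i ≤ 1 * lam i :=
        mul_le_mul_of_nonneg_right (unitary_diag_re_le_one hCmu i) (hnn i)
  _ = lam i := one_mul _

/-- polar decomposition -/
lemma polar (A : Matrix (Fin d) (Fin d) ℂ) :
    ∃ U : Matrix (Fin d) (Fin d) ℂ, Uᴴ * U = 1 ∧ U * Uᴴ = 1 ∧ A = U * matAbs A := by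
  have hpsd := Matrix.posSemidef_conjTranspose_mul_self A
  obtain ⟨V, lam, hV1, hV2, hspec, hnn, htr⟩ := psd_package hpsd
  have habs : matAbs A = V * Matrix.diagonal (fun i => ((Real.sqrt (lam i) : ℝ) : ℂ)) * Vᴴ := by
    refine matAbs_eq ?_ ?_
    · refine Matrix.PosSemidef.mul_mul_conjTranspose_same ?_ V
      exact Matrix.PosSemidef.diagonal fun i =>
        (by show (0:ℂ) ≤ _; exact Complex.zero_le_real.mpr (Real.sqrt_nonneg _))
    · rw [unitary_conj_mul hV1, Matrix.diagonal_mul_diagonal]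
      have h2 : (fun i => (((Real.sqrt (lam i) : ℝ) : ℂ) * ((Real.sqrt (lam i) : ℝ) : ℂ)))
          = (fun i => ((lam i : ℝ) : ℂ)) := by
        funext i
        rw [← Complex.ofReal_mul, Real.mul_self_sqrt (hnn i)]
      rw [h2, ← hspec]
  have hmat : (A * V)ᴴ * (A * V) = Matrix.diagonal (fun i => (lam i : ℂ)) := by
    rw [Matrix.conjTranspose_mul]
    calc Vᴴ * Aᴴ * (A * V) = Vᴴ * (Aᴴ * A) * V := by simp only [Matrix.mul_assoc]
    _ = Vᴴ * (V * Matrix.diagonal (fun i => (lam i : ℂ)) * Vᴴ) * V := by rw [← hspec]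
    _ = (Vᴴ * V) * (Matrix.diagonal (fun i => (lam i : ℂ)) * (Vᴴ * V)) := by
        simp only [Matrix.mul_assoc]
    _ = _ := by rw [hV1, Matrix.one_mul, Matrix.mul_one]
  have hgram : ∀ i j, (∑ k, (starRingEnd ℂ) ((A * V) k i) * ((A * V) k j))
      = if i = j then (lam i : ℂ) else 0 := by
    intro i j
    have h1 : ((A * V)ᴴ * (A * V)) i j = Matrix.diagonal (fun i => (lam i : ℂ)) i j := by
      rw [hmat]
    rw [Matrix.diagonal_apply, Matrix.mul_apply] at h1
    rw [← h1]
    refine Finset.sum_congr rfl fun k _ => ?_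
    rw [Matrix.conjTranspose_apply]
    rfl
  set w : Fin d → EuclideanSpace ℂ (Fin d) := fun i => WithLp.toLp 2 (fun k => (A * V) k i) with hw
  have hinner : ∀ i j, (inner ℂ (w i) (w j) : ℂ) = if i = j then (lam i : ℂ) else 0 := by
    intro i j
    rw [PiLp.inner_apply]
    simpa [RCLike.inner_apply, mul_comm] using hgram i j
  set v : Fin d → EuclideanSpace ℂ (Fin d) :=
    fun i => (((Real.sqrt (lam i) : ℝ) : ℂ))⁻¹ • w i with hv
  have horth : Orthonormal ℂ (Set.restrict {i | lam i ≠ 0} v) := by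
    rw [orthonormal_iff_ite]
    rintro ⟨i, hi⟩ ⟨j, hj⟩
    simp only [Set.restrict_apply, hv]
    show inner ℂ ((((Real.sqrt (lam i) : ℝ) : ℂ))⁻¹ • w i)
      ((((Real.sqrt (lam j) : ℝ) : ℂ))⁻¹ • w j) = _
    rw [inner_smul_left, inner_smul_right, hinner i j]
    by_cases hij : i = j
    · subst hij
      simp only [if_pos rfl, Subtype.mk.injEq, ↓reduceIte]
      have hpos : 0 < lam i := lt_of_le_of_ne (hnn i) (Ne.symm hi)
      have hsq : (0:ℝ) < Real.sqrt (lam i) := Real.sqrt_pos.mpr hpos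
      rw [map_inv₀, Complex.conj_ofReal]
      rw [show ((Real.sqrt (lam i) : ℝ) : ℂ)⁻¹ * (((Real.sqrt (lam i) : ℝ) : ℂ)⁻¹ * (lam i : ℂ))
          = ((((Real.sqrt (lam i)) * (Real.sqrt (lam i)) : ℝ) : ℂ))⁻¹ * (lam i : ℂ) from by
        push_cast; ring]
      rw [Real.mul_self_sqrt (hnn i)]
      rw [inv_mul_cancel₀ (by exact_mod_cast hpos.ne')]
    · have hne : ¬((⟨i, hi⟩ : {i | lam i ≠ 0}) = ⟨j, hj⟩) := by
        simp [Subtype.mk.injEq, hij]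
      rw [if_neg hij, if_neg hne]
      simp
  have card : Module.finrank ℂ (EuclideanSpace ℂ (Fin d)) = Fintype.card (Fin d) := by
    simp [finrank_euclideanSpace]
  obtain ⟨b, hb⟩ := horth.exists_orthonormalBasis_extension_of_card_eq card
  set C : Matrix (Fin d) (Fin d) ℂ := Matrix.of (fun k i => b i k) with hC
  have hCu : Cᴴ * C = 1 := by
    ext i j
    rw [Matrix.mul_apply, Matrix.one_apply]
    have ho := (orthonormal_iff_ite.mp b.orthonormal) i j
    rw [PiLp.inner_apply] at ho
    simp only [RCLike.inner_apply] at ho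
    rw [← ho]
    simp [hC, Matrix.conjTranspose_apply, mul_comm]
  have hCC : C * Cᴴ = 1 := mul_eq_one_comm.mp hCu
  refine ⟨C * Vᴴ, ?_, ?_, ?_⟩
  · simp only [Matrix.conjTranspose_mul, Matrix.conjTranspose_conjTranspose, Matrix.mul_assoc]
    rw [← Matrix.mul_assoc Cᴴ C, hCu, Matrix.one_mul, hV2]
  · simp only [Matrix.conjTranspose_mul, Matrix.conjTranspose_conjTranspose, Matrix.mul_assoc]
    rw [← Matrix.mul_assoc Vᴴ V, hV1, Matrix.one_mul, hCC]
  · have hkey : A * V = C * Matrix.diagonal (fun i => ((Real.sqrt (lam i) : ℝ) : ℂ)) := by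
      ext k i
      rw [Matrix.mul_diagonal]
      by_cases hi : lam i = 0
      · have hwz : w i = 0 := by
          have h0 := hinner i i
          rw [if_pos rfl, hi] at h0
          exact inner_self_eq_zero.mp (by rw [h0]; simp)
        have hz : (A * V) k i = 0 := by
          have := congrArg (fun z : EuclideanSpace ℂ (Fin d) => z k) hwz
          simpa [hw] using this
        rw [hz, hi]
        simp
      · have hbv : b i = v i := hb i hi
        have hsq : Real.sqrt (lam i) ≠ 0 :=
          Real.sqrt_ne_zero'.mpr (lt_of_le_of_ne (hnn i) (Ne.symm hi))
        have hcstep : C k i = (((Real.sqrt (lam i) : ℝ) : ℂ))⁻¹ * (A * V) k i := by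
          simp only [hC, Matrix.of_apply, hbv, hv]
          rfl
        rw [hcstep]
        have hcne : (((Real.sqrt (lam i) : ℝ) : ℂ)) ≠ 0 := by exact_mod_cast hsq
        field_simp
    calc A = A * V * Vᴴ := by rw [Matrix.mul_assoc, hV2, Matrix.mul_one]
    _ = C * Matrix.diagonal (fun i => ((Real.sqrt (lam i) : ℝ) : ℂ)) * Vᴴ := by rw [hkey]
    _ = C * Vᴴ * matAbs A := by
        rw [habs]
        have h3 : C * Vᴴ * (V * Matrix.diagonal (fun i => ((Real.sqrt (lam i) : ℝ) : ℂ)) * Vᴴ)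
            = C * ((Vᴴ * V) * (Matrix.diagonal (fun i => ((Real.sqrt (lam i) : ℝ) : ℂ)) * Vᴴ)) := by
          simp only [Matrix.mul_assoc]
        rw [h3, hV1, Matrix.one_mul, ← Matrix.mul_assoc]

lemma re_trace_le_trace_abs (A : Matrix (Fin d) (Fin d) ℂ) :
    (A.trace).re ≤ (matAbs A).trace.re := by
  obtain ⟨U, hU1, hU2, hA⟩ := polar A
  conv_lhs => rw [hA]
  exact trace_unitary_mul_psd_le (matAbs_posSemidef A) hU1

lemma exists_unitary_trace_eq (A : Matrix (Fin d) (Fin d) ℂ) :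
    ∃ U : Matrix (Fin d) (Fin d) ℂ, Uᴴ * U = 1 ∧ U * Uᴴ = 1
      ∧ (A * U).trace = (matAbs A).trace := by
  obtain ⟨U, hU1, hU2, hA⟩ := polar A
  refine ⟨Uᴴ, by rw [Matrix.conjTranspose_conjTranspose]; exact hU2,
    by rw [Matrix.conjTranspose_conjTranspose]; exact hU1, ?_⟩
  conv_lhs => rw [hA, Matrix.mul_assoc]
  rw [Matrix.trace_mul_comm, Matrix.mul_assoc, hU1, Matrix.mul_one]

/-- Fuchs–van de Graaf:
1 - (1/2)‖ρ-σ‖₁ ≤ F(ρ,σ) ≤ √(1 - (1/4)‖ρ-σ‖₁²). -/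
theorem fuchs_van_de_graaf {d : ℕ} (ρ σ : Matrix (Fin d) (Fin d) ℂ)
    (hρ : ρ.PosSemidef) (hσ : σ.PosSemidef)
    (hρ1 : ρ.trace = 1) (hσ1 : σ.trace = 1) :
    1 - (1 / 2) * (matAbs (ρ - σ)).trace.re ≤ fid ρ σ ∧
    fid ρ σ ≤ Real.sqrt (1 - (1 / 4) * ((matAbs (ρ - σ)).trace.re) ^ 2) := by
  set a : Matrix (Fin d) (Fin d) ℂ := matSqrt ρ with ha
  set b : Matrix (Fin d) (Fin d) ℂ := matSqrt σ with hb
  have haP : a.PosSemidef := matSqrt_posSemidef hρ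
  have hbP : b.PosSemidef := matSqrt_posSemidef hσ
  have haa : a * a = ρ := matSqrt_mul_self hρ
  have hbb : b * b = σ := matSqrt_mul_self hσ
  have haH : aᴴ = a := haP.1
  have hbH : bᴴ = b := hbP.1
  have hFdef : fid ρ σ = (matAbs (a * b)).trace.re := rfl
  set F : ℝ := (matAbs (a * b)).trace.re with hF
  set N : ℝ := (matAbs (ρ - σ)).trace.re with hN
  have hF0 : 0 ≤ F := psd_trace_re_nonneg (matAbs_posSemidef _)
  have hN0 : 0 ≤ N := psd_trace_re_nonneg (matAbs_posSemidef _)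
  have hHermRS : (ρ - σ).IsHermitian := hρ.1.sub hσ.1
  have hρre : ρ.trace.re = 1 := by rw [hρ1]; simp
  have hσre : σ.trace.re = 1 := by rw [hσ1]; simp
  constructor
  · -- lower bound
    set g : ℝ := ((a * b).trace).re with hg
    have hgF : g ≤ F := re_trace_le_trace_abs (a * b)
    have hHermS : (a - b).IsHermitian := haP.1.sub hbP.1
    obtain ⟨V, mu, hV1, hV2, hspecS, htrS⟩ := herm_package hHermS
    set D : Matrix (Fin d) (Fin d) ℂ := Matrix.diagonal (fun i => (mu i : ℂ)) with hD
    set Y : Matrix (Fin d) (Fin d) ℂ := Vᴴ * (a + b) * V with hY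
    set X : Matrix (Fin d) (Fin d) ℂ := Vᴴ * (ρ - σ) * V with hX
    have hexp : (a - b) * (a - b) = ρ + σ - (a * b + b * a) := by
      rw [← haa, ← hbb]; noncomm_ring
    have h2g : ((a - b) * (a - b)).trace.re = 2 - 2 * g := by
      rw [hexp, Matrix.trace_sub, Matrix.trace_add, Matrix.trace_add,
        Matrix.trace_mul_comm b a, Complex.sub_re, Complex.add_re, Complex.add_re,
        hρre, hσre]
      rw [hg]
      ring
    have hsum : ((a - b) * (a - b)).trace.re = ∑ i, (mu i) ^ 2 := by
      conv_lhs => rw [hspecS]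
      rw [unitary_conj_mul hV1, Matrix.diagonal_mul_diagonal, trace_unitary_conj hV1,
        Matrix.trace_diagonal, Complex.re_sum]
      refine Finset.sum_congr rfl fun i _ => ?_
      rw [← Complex.ofReal_mul, Complex.ofReal_re, sq]
    have hDsand : Vᴴ * (a - b) * V = D := by
      conv_lhs => rw [hspecS]
      calc Vᴴ * (V * Matrix.diagonal (fun i => (mu i : ℂ)) * Vᴴ) * V
          = (Vᴴ * V) * (Matrix.diagonal (fun i => (mu i : ℂ)) * (Vᴴ * V)) := by
            simp only [Matrix.mul_assoc]
      _ = D := by rw [hV1, Matrix.one_mul, Matrix.mul_one, hD]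
    have hXX : X + X = D * Y + Y * D := by
      have hiden : (ρ - σ) + (ρ - σ) = (a - b) * (a + b) + (a + b) * (a - b) := by
        rw [← haa, ← hbb]; noncomm_ring
      have hfac1 : Vᴴ * ((a - b) * (a + b)) * V = D * Y := by
        rw [← hDsand, hY]
        calc Vᴴ * ((a - b) * (a + b)) * V
            = Vᴴ * (a - b) * ((V * Vᴴ) * ((a + b) * V)) := by
              rw [hV2, Matrix.one_mul]; simp only [Matrix.mul_assoc]
        _ = (Vᴴ * (a - b) * V) * (Vᴴ * (a + b) * V) := by simp only [Matrix.mul_assoc]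
      have hfac2 : Vᴴ * ((a + b) * (a - b)) * V = Y * D := by
        rw [← hDsand, hY]
        calc Vᴴ * ((a + b) * (a - b)) * V
            = Vᴴ * (a + b) * ((V * Vᴴ) * ((a - b) * V)) := by
              rw [hV2, Matrix.one_mul]; simp only [Matrix.mul_assoc]
        _ = (Vᴴ * (a + b) * V) * (Vᴴ * (a - b) * V) := by simp only [Matrix.mul_assoc]
      rw [hX, ← hfac1, ← hfac2]
      rw [show Vᴴ * (ρ - σ) * V + Vᴴ * (ρ - σ) * V = Vᴴ * ((ρ - σ) + (ρ - σ)) * V from by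
        rw [Matrix.mul_add, Matrix.add_mul]]
      rw [hiden, Matrix.mul_add, Matrix.add_mul]
    have hXd : ∀ i, X i i = (mu i : ℂ) * (Y i i) := by
      intro i
      have h1 : (X + X) i i = (D * Y + Y * D) i i := by rw [hXX]
      have h2 : X i i + X i i = (mu i : ℂ) * Y i i + Y i i * (mu i : ℂ) := by
        rw [← Matrix.add_apply, h1, Matrix.add_apply, hD, Matrix.diagonal_mul,
          Matrix.mul_diagonal]
      have h3 : (2 : ℂ) * (X i i) = 2 * ((mu i : ℂ) * Y i i) := by
        rw [two_mul, two_mul, h2]; ring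
      exact mul_left_cancel₀ two_ne_zero h3
    have hYge : ∀ i, |mu i| ≤ (Y i i).re := by
      intro i
      have hplus : (a + b) - (a - b) = b + b := by noncomm_ring
      have hminus : (a + b) + (a - b) = a + a := by noncomm_ring
      have hP1 : (Vᴴ * (b + b) * V).PosSemidef := (hbP.add hbP).conjTranspose_mul_mul_same V
      have hP2 : (Vᴴ * (a + a) * V).PosSemidef := (haP.add haP).conjTranspose_mul_mul_same V
      have hYD1 : Vᴴ * (b + b) * V = Y - D := by
        rw [← hplus, Matrix.mul_sub, Matrix.sub_mul, hDsand, ← hY]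
      have hYD2 : Vᴴ * (a + a) * V = Y + D := by
        rw [← hminus, Matrix.mul_add, Matrix.add_mul, hDsand, ← hY]
      have h1 := psd_diag_re hP1 i
      rw [hYD1, Matrix.sub_apply, Complex.sub_re, hD, Matrix.diagonal_apply_eq,
        Complex.ofReal_re] at h1
      have h2 := psd_diag_re hP2 i
      rw [hYD2, Matrix.add_apply, Complex.add_re, hD, Matrix.diagonal_apply_eq,
        Complex.ofReal_re] at h2
      rw [abs_le]
      constructor <;> linarith
    have hpt : ∀ i, mu i ^ 2 ≤ |(X i i).re| := by
      intro i
      have hXre : (X i i).re = mu i * (Y i i).re := by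
        rw [hXd i, Complex.mul_re, Complex.ofReal_re, Complex.ofReal_im]; ring
      have h0 : 0 ≤ (Y i i).re := le_trans (abs_nonneg _) (hYge i)
      rw [hXre, abs_mul, abs_of_nonneg h0]
      calc mu i ^ 2 = |mu i| * |mu i| := by rw [← sq_abs]; ring
      _ ≤ |mu i| * (Y i i).re := mul_le_mul_of_nonneg_left (hYge i) (abs_nonneg _)
    have hdsum := diag_sum_le hHermRS hV1 (H := ρ - σ) (C := V)
    rw [← hN] at hdsum
    have hXsum : ∑ i, |(X i i).re| ≤ N := by
      rw [hX]
      exact hdsum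
    have hle : 2 - 2 * g ≤ N := by
      have h1 : ∑ i, mu i ^ 2 ≤ ∑ i, |(X i i).re| := Finset.sum_le_sum fun i _ => hpt i
      linarith [h2g, hsum, hXsum]
    rw [hFdef]
    linarith
  · -- upper bound
    obtain ⟨U₀, hU01, hU02, htrU⟩ := exists_unitary_trace_eq (a * b)
    set c : Matrix (Fin d) (Fin d) ℂ := b * U₀ with hc
    have hccH : c * cᴴ = σ := by
      rw [hc, Matrix.conjTranspose_mul, hbH]
      calc b * U₀ * (U₀ᴴ * b) = b * ((U₀ * U₀ᴴ) * b) := by simp only [Matrix.mul_assoc]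
      _ = σ := by rw [hU02, Matrix.one_mul, hbb]
    set S' : Matrix (Fin d) (Fin d) ℂ := a - c with hS'
    set T' : Matrix (Fin d) (Fin d) ℂ := a + c with hT'
    have hS'H : S'ᴴ = a - cᴴ := by rw [hS', Matrix.conjTranspose_sub, haH]
    have hT'H : T'ᴴ = a + cᴴ := by rw [hT', Matrix.conjTranspose_add, haH]
    have h1tr : (a * a).trace.re = 1 := by rw [haa, hρre]
    have h2tr : (cᴴ * c).trace.re = 1 := by rw [Matrix.trace_mul_comm, hccH, hσre]
    have h3tr : (a * c).trace.re = F := by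
      rw [hc, ← Matrix.mul_assoc, htrU, hF]
    have h4tr : (cᴴ * a).trace.re = F := by
      have he : (a * c)ᴴ = cᴴ * a := by rw [Matrix.conjTranspose_mul, haH]
      rw [← he, Matrix.trace_conjTranspose]
      simpa using h3tr
    have hfrobS : frob S' S' = 2 - 2 * F := by
      have hexp : S'ᴴ * S' = a * a + cᴴ * c - (a * c + cᴴ * a) := by
        rw [hS'H, hS']; noncomm_ring
      rw [frob, hexp, Matrix.trace_sub, Matrix.trace_add, Matrix.trace_add,
        Complex.sub_re, Complex.add_re, Complex.add_re, h1tr, h2tr, h3tr, h4tr]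
      ring
    have hfrobT : frob T' T' = 2 + 2 * F := by
      have hexp : T'ᴴ * T' = a * a + cᴴ * c + (a * c + cᴴ * a) := by
        rw [hT'H, hT']; noncomm_ring
      rw [frob, hexp, Matrix.trace_add, Matrix.trace_add, Matrix.trace_add,
        Complex.add_re, Complex.add_re, Complex.add_re, h1tr, h2tr, h3tr, h4tr]
      ring
    have hident : S' * T'ᴴ + T' * S'ᴴ = (ρ - σ) + (ρ - σ) := by
      rw [hT'H, hS'H, hS', hT', ← haa, ← hccH]; noncomm_ring
    obtain ⟨W, hW, hWtr⟩ := exists_unitary_trace_abs hHermRS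
    rw [← hN] at hWtr
    have hWW : W * Wᴴ = 1 := mul_eq_one_comm.mp hW
    have hWWH : (Wᴴ)ᴴ * Wᴴ = 1 := by rw [Matrix.conjTranspose_conjTranspose]; exact hWW
    have hterm1 : (W * (S' * T'ᴴ)).trace.re ≤ fnorm T' * fnorm S' := by
      have he : W * (S' * T'ᴴ) = (W * S') * T'ᴴ := by simp only [Matrix.mul_assoc]
      rw [he, Matrix.trace_mul_comm]
      have he2 : T'ᴴ * (W * S') = (Wᴴ * T')ᴴ * S' := by
        rw [Matrix.conjTranspose_mul, Matrix.conjTranspose_conjTranspose, Matrix.mul_assoc]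
      rw [he2]
      calc ((Wᴴ * T')ᴴ * S').trace.re = frob (Wᴴ * T') S' := rfl
      _ ≤ fnorm (Wᴴ * T') * fnorm S' := frob_le _ _
      _ = fnorm T' * fnorm S' := by rw [fnorm_unitary_left hWWH T']
    have hterm2 : (W * (T' * S'ᴴ)).trace.re ≤ fnorm S' * fnorm T' := by
      have he : W * (T' * S'ᴴ) = (W * T') * S'ᴴ := by simp only [Matrix.mul_assoc]
      rw [he, Matrix.trace_mul_comm]
      have he2 : S'ᴴ * (W * T') = (Wᴴ * S')ᴴ * T' := by
        rw [Matrix.conjTranspose_mul, Matrix.conjTranspose_conjTranspose, Matrix.mul_assoc]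
      rw [he2]
      calc ((Wᴴ * S')ᴴ * T').trace.re = frob (Wᴴ * S') T' := rfl
      _ ≤ fnorm (Wᴴ * S') * fnorm T' := frob_le _ _
      _ = fnorm S' * fnorm T' := by rw [fnorm_unitary_left hWWH S']
    have e1 : (W * ((ρ - σ) + (ρ - σ))).trace.re = 2 * N := by
      rw [Matrix.mul_add, Matrix.trace_add, Complex.add_re, hWtr]; ring
    have e2 : (W * ((ρ - σ) + (ρ - σ))).trace.re
        = (W * (S' * T'ᴴ)).trace.re + (W * (T' * S'ᴴ)).trace.re := by
      rw [← hident, Matrix.mul_add, Matrix.trace_add, Complex.add_re]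
    have hNle : N ≤ fnorm S' * fnorm T' := by
      have : 2 * N ≤ 2 * (fnorm S' * fnorm T') := by
        rw [← e1, e2]
        have := hterm1
        have := hterm2
        nlinarith [hterm1, hterm2, mul_comm (fnorm T') (fnorm S')]
      linarith
    have hsq : N ^ 2 ≤ (2 - 2 * F) * (2 + 2 * F) := by
      have h1 : N ^ 2 ≤ (fnorm S' * fnorm T') ^ 2 := pow_le_pow_left₀ hN0 hNle 2
      rw [mul_pow, fnorm_sq, fnorm_sq, hfrobS, hfrobT] at h1
      exact h1
    rw [hFdef]
    rw [Real.le_sqrt hF0]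
    · linarith [hsq]
    · linarith [hsq, sq_nonneg F]
end
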